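/- For every complex number w with w ∉ ℤ, Euler's partial fraction expansion holds: π cot(πw) = 1/w + ∑_{n≥1} ( 1/(w+n) + 1/(w-n) ), where the series converges (the n-th term equals 2w/(w²-n²)). -/

import Mathlib

open Complex Polynomial Filter

/-- The Eulerian polynomials, defined by the recurrence
`A 0 = 1`, `A (n+1) = (1 + n*X) * A n + X*(1-X) * (A n)'`. -/
noncomputable def eulerianPoly : ℕ → Polynomial ℤ
  | 0 => 1
  | n + 1 => (1 + Polynomial.C (n : ℤ) * Polynomial.X) * eulerianPoly n
      + Polynomial.X * (1 - Polynomial.X) * Polynomial.derivative (eulerianPoly n)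

/-- The Eulerian numbers `E(n,k)`, coefficients of the Eulerian polynomials. -/
noncomputable def eulerianNum (n k : ℕ) : ℤ := (eulerianPoly n).coeff k

section CotAux

open Real Topology Finset

private lemma aux_summable (c : ℝ) : Summable (fun j : ℕ => c / ((j : ℝ) + 1) ^ 2) := by
  have h : Summable (fun j : ℕ => ((j : ℝ) + 1) ^ 2)⁻¹ := by
    have := (summable_nat_add_iff 1).mpr (Real.summable_one_div_nat_pow.mpr one_lt_two)
    exact this.congr (fun j => by simp [one_div])
  simpa [div_eq_mul_inv] using h.mul_left c

private lemma aux_prod_le_exp (s : Finset ℕ) (x : ℕ → ℝ) (hx : ∀ j, 0 ≤ x j) :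
    ∏ j ∈ s, (1 + x j) ≤ Real.exp (∑ j ∈ s, x j) := by
  rw [Real.exp_sum]
  exact Finset.prod_le_prod (fun j _ => by have := hx j; positivity)
    (fun j _ => by simpa [add_comm] using Real.add_one_le_exp (x j))

private lemma aux_norm_prod_le (s : Finset ℕ) (g : ℕ → ℂ) :
    ‖∏ j ∈ s, (1 + g j)‖ ≤ ∏ j ∈ s, (1 + ‖g j‖) := by
  calc ‖∏ j ∈ s, (1 + g j)‖ ≤ ∏ j ∈ s, ‖(1 : ℂ) + g j‖ := Finset.norm_prod_le _ _
  _ ≤ ∏ j ∈ s, (1 + ‖g j‖) := Finset.prod_le_prod (fun j _ => norm_nonneg _)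
      (fun j _ => (norm_add_le _ _).trans (by simp))

private lemma aux_prod_sub_one (s : Finset ℕ) (g : ℕ → ℂ) :
    ‖∏ j ∈ s, (1 + g j) - 1‖ ≤ ∏ j ∈ s, (1 + ‖g j‖) - 1 := by
  induction s using Finset.cons_induction with
  | empty => simp
  | cons a s ha ih =>
    rw [Finset.prod_cons, Finset.prod_cons]
    have h1 : (1 + g a) * ∏ j ∈ s, (1 + g j) - 1
        = (∏ j ∈ s, (1 + g j) - 1) + g a * ∏ j ∈ s, (1 + g j) := by ring
    rw [h1]
    have h2 := norm_add_le (∏ j ∈ s, (1 + g j) - 1) (g a * ∏ j ∈ s, (1 + g j))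
    rw [norm_mul] at h2
    refine h2.trans ?_
    have h3 := aux_norm_prod_le s g
    calc ‖∏ j ∈ s, (1 + g j) - 1‖ + ‖g a‖ * ‖∏ j ∈ s, (1 + g j)‖
        ≤ (∏ j ∈ s, (1 + ‖g j‖) - 1) + ‖g a‖ * ∏ j ∈ s, (1 + ‖g j‖) := by gcongr
      _ = (1 + ‖g a‖) * ∏ j ∈ s, (1 + ‖g j‖) - 1 := by ring

/-- Partial products of the Euler sine product. -/
private noncomputable def sinP (n : ℕ) (z : ℂ) : ℂ :=
  ↑Real.pi * z * ∏ j ∈ Finset.range n, (1 - z ^ 2 / ((j : ℂ) + 1) ^ 2)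

private lemma aux_norm_sq (j : ℕ) : ‖((j : ℂ) + 1) ^ 2‖ = ((j : ℝ) + 1) ^ 2 := by
  rw [show ((j : ℂ) + 1) ^ 2 = ((((j : ℝ) + 1) ^ 2 : ℝ) : ℂ) by push_cast; ring,
    Complex.norm_real, Real.norm_eq_abs]
  exact abs_of_nonneg (by positivity)

private lemma aux_tuo (R : ℝ) (hR : 0 ≤ R) :
    TendstoUniformlyOn sinP (fun z => Complex.sin (Real.pi * z)) atTop
      (Metric.closedBall (0 : ℂ) R) := by
  set u : ℕ → ℝ := fun j => R ^ 2 / ((j : ℝ) + 1) ^ 2 with hu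
  have hupos : ∀ j, 0 ≤ u j := fun j => by positivity
  have husum : Summable u := aux_summable _
  have hgb : ∀ (j : ℕ) (z : ℂ), z ∈ Metric.closedBall (0 : ℂ) R →
      ‖-(z ^ 2 / ((j : ℂ) + 1) ^ 2)‖ ≤ u j := by
    intro j z hz
    rw [Metric.mem_closedBall, dist_zero_right] at hz
    rw [norm_neg, norm_div, norm_pow, aux_norm_sq]
    show ‖z‖ ^ 2 / ((j : ℝ) + 1) ^ 2 ≤ R ^ 2 / ((j : ℝ) + 1) ^ 2
    gcongr
  set C : ℝ := Real.pi * R * Real.exp (∑' j, u j) with hC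
  have hCpos : 0 ≤ C := by positivity
  have hPb : ∀ (n : ℕ) (z : ℂ), z ∈ Metric.closedBall (0 : ℂ) R → ‖sinP n z‖ ≤ C := by
    intro n z hz
    have hz' := hz
    rw [Metric.mem_closedBall, dist_zero_right] at hz'
    rw [sinP, norm_mul, norm_mul]
    have h1 : ‖∏ j ∈ Finset.range n, (1 - z ^ 2 / ((j : ℂ) + 1) ^ 2)‖
        ≤ Real.exp (∑' j, u j) := by
      have h2 : ∀ j ∈ Finset.range n, (1 - z ^ 2 / ((j : ℂ) + 1) ^ 2)
          = 1 + -(z ^ 2 / ((j : ℂ) + 1) ^ 2) := fun j _ => by ring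
      rw [Finset.prod_congr rfl h2]
      have h3 : ‖∏ j ∈ Finset.range n, (1 + -(z ^ 2 / ((j : ℂ) + 1) ^ 2))‖
          ≤ ∏ j ∈ Finset.range n, (1 + u j) := by
        refine (Finset.norm_prod_le _ _).trans
          (Finset.prod_le_prod (fun j _ => norm_nonneg _) ?_)
        intro j hj
        refine (norm_add_le _ _).trans ?_
        have := hgb j z hz
        simp only [norm_one]
        linarith
      refine h3.trans ((aux_prod_le_exp _ u hupos).trans ?_)
      exact Real.exp_le_exp.mpr (Summable.sum_le_tsum _ (fun j _ => hupos j) husum)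
    have h4 : ‖(Real.pi : ℂ)‖ * ‖z‖ ≤ Real.pi * R := by
      rw [Complex.norm_real, Real.norm_eq_abs, abs_of_pos Real.pi_pos]
      gcongr
    calc ‖(Real.pi : ℂ)‖ * ‖z‖ * ‖∏ j ∈ Finset.range n, (1 - z ^ 2 / ((j : ℂ) + 1) ^ 2)‖
        ≤ (Real.pi * R) * Real.exp (∑' j, u j) :=
          mul_le_mul h4 h1 (norm_nonneg _) (by positivity)
      _ = C := rfl
  have hcauchy : UniformCauchySeqOn sinP atTop (Metric.closedBall (0 : ℂ) R) := by
    rw [Metric.uniformCauchySeqOn_iff]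
    intro ε hε
    have htail : Tendsto (fun n => (C + 1) * (Real.exp (∑' k, u (k + n)) - 1)) atTop (𝓝 0) := by
      have h0 := tendsto_sum_nat_add u
      have : Tendsto (fun n => Real.exp (∑' k, u (k + n)) - 1) atTop (𝓝 0) := by
        have h1 := (Real.continuous_exp.tendsto 0).comp h0
        have h2 : Tendsto (fun n => Real.exp (∑' k, u (k + n))) atTop (𝓝 1) := by
          simpa [Function.comp_def] using h1
        simpa using h2.sub_const 1
      simpa using this.const_mul (C + 1)
    obtain ⟨N, hN⟩ := (htail.eventually (eventually_lt_nhds hε)).exists_forall_of_atTop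
    refine ⟨N, ?_⟩
    have key : ∀ m n, N ≤ n → n ≤ m → ∀ z ∈ Metric.closedBall (0 : ℂ) R,
        dist (sinP m z) (sinP n z) < ε := by
      intro m n hNn hnm z hz
      rw [dist_eq_norm]
      have hsplit : sinP m z
          = sinP n z * ∏ j ∈ Finset.Ico n m, (1 - z ^ 2 / ((j : ℂ) + 1) ^ 2) := by
        rw [sinP, sinP, ← Finset.prod_range_mul_prod_Ico _ hnm]; ring
      rw [hsplit]
      have h5 : sinP n z * ∏ j ∈ Finset.Ico n m, (1 - z ^ 2 / ((j : ℂ) + 1) ^ 2) - sinP n z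
          = sinP n z * (∏ j ∈ Finset.Ico n m, (1 - z ^ 2 / ((j : ℂ) + 1) ^ 2) - 1) := by ring
      rw [h5, norm_mul]
      have h6 : ‖∏ j ∈ Finset.Ico n m, (1 - z ^ 2 / ((j : ℂ) + 1) ^ 2) - 1‖
          ≤ Real.exp (∑' k, u (k + N)) - 1 := by
        have h2 : ∀ j ∈ Finset.Ico n m, (1 - z ^ 2 / ((j : ℂ) + 1) ^ 2)
            = 1 + -(z ^ 2 / ((j : ℂ) + 1) ^ 2) := fun j _ => by ring
        rw [Finset.prod_congr rfl h2]
        refine (aux_prod_sub_one _ _).trans ?_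
        have h7 : ∏ j ∈ Finset.Ico n m, (1 + ‖-(z ^ 2 / ((j : ℂ) + 1) ^ 2)‖)
            ≤ ∏ j ∈ Finset.Ico n m, (1 + u j) :=
          Finset.prod_le_prod (fun j _ => by positivity) (fun j _ => by
            have := hgb j z hz; linarith)
        have h8 : ∑ j ∈ Finset.Ico n m, u j ≤ ∑' k, u (k + N) := by
          have hsub : Finset.Ico n m ⊆ Finset.Ico N m :=
            Finset.Ico_subset_Ico hNn le_rfl
          have h9 : ∑ j ∈ Finset.Ico n m, u j ≤ ∑ j ∈ Finset.Ico N m, u j :=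
            Finset.sum_le_sum_of_subset_of_nonneg hsub (fun j _ _ => hupos j)
          refine h9.trans ?_
          rw [Finset.sum_Ico_eq_sum_range]
          have hsum2 : Summable (fun k => u (k + N)) := (summable_nat_add_iff N).mpr husum
          have := Summable.sum_le_tsum (Finset.range (m - N)) (fun k _ => hupos _) hsum2
          simpa [add_comm] using this
        have h10 : ∏ j ∈ Finset.Ico n m, (1 + u j) ≤ Real.exp (∑' k, u (k + N)) :=
          (aux_prod_le_exp _ u hupos).trans (Real.exp_le_exp.mpr h8)
        linarith
      calc ‖sinP n z‖ * ‖∏ j ∈ Finset.Ico n m, (1 - z ^ 2 / ((j : ℂ) + 1) ^ 2) - 1‖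
          ≤ C * (Real.exp (∑' k, u (k + N)) - 1) := by
            refine mul_le_mul (hPb n z hz) h6 (norm_nonneg _) hCpos
        _ ≤ (C + 1) * (Real.exp (∑' k, u (k + N)) - 1) := by
            have : (0:ℝ) ≤ Real.exp (∑' k, u (k + N)) - 1 := by
              have : (1:ℝ) ≤ Real.exp (∑' k, u (k + N)) := by
                rw [← Real.exp_zero]
                exact Real.exp_le_exp.mpr (tsum_nonneg (fun k => hupos _))
              linarith
            nlinarith
        _ < ε := hN N le_rfl
    intro m hm n hn z hz
    rcases le_total n m with h | h
    · exact key m n hn h z hz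
    · rw [dist_comm]; exact key n m hm h z hz
  exact hcauchy.tendstoUniformlyOn_of_tendsto
    (fun z _ => Complex.tendsto_euler_sin_prod z)

private lemma aux_logDeriv_factor (w c : ℂ) (hc0 : c ≠ 0) (h1 : w + c ≠ 0) (h2 : w - c ≠ 0) :
    logDeriv (fun z : ℂ => 1 - z ^ 2 / c ^ 2) w = 1 / (w + c) + 1 / (w - c) := by
  have hfne : 1 - w ^ 2 / c ^ 2 ≠ 0 := by
    have hne : w ^ 2 - c ^ 2 ≠ 0 := by
      have h3 : (w - c) * (w + c) ≠ 0 := mul_ne_zero h2 h1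
      intro h; apply h3; rw [show (w - c) * (w + c) = w ^ 2 - c ^ 2 by ring, h]
    intro h
    apply hne
    field_simp at h
    linear_combination -h
  rw [logDeriv_apply]
  have hd : deriv (fun z : ℂ => 1 - z ^ 2 / c ^ 2) w = -(2 * w / c ^ 2) := by
    have h : HasDerivAt (fun z : ℂ => 1 - z ^ 2 / c ^ 2) (-(2 * w / c ^ 2)) w := by
      have := ((hasDerivAt_pow 2 w).div_const (c ^ 2)).const_sub 1
      simpa using this
    exact h.deriv
  rw [hd]
  have e1 : (1 : ℂ)/(w+c) + 1/(w-c) = 2*w/((w+c)*(w-c)) := by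
    field_simp
    ring
  rw [e1, div_eq_div_iff hfne (mul_ne_zero h1 h2)]
  field_simp
  ring

private lemma aux_logDeriv_sin (w : ℂ) : logDeriv (fun z : ℂ => Complex.sin (↑Real.pi * z)) w
    = ↑Real.pi * Complex.cot (↑Real.pi * w) := by
  rw [logDeriv_apply]
  have h0 : HasDerivAt (fun z : ℂ => (Real.pi : ℂ) * z) (Real.pi : ℂ) w := by
    simpa using (hasDerivAt_id w).const_mul (Real.pi : ℂ)
  have h : HasDerivAt (fun z : ℂ => Complex.sin ((Real.pi : ℂ) * z))
      (Complex.cos ((Real.pi : ℂ) * w) * (Real.pi : ℂ)) w :=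
    (Complex.hasDerivAt_sin _).comp w h0
  rw [h.deriv, Complex.cot_eq_cos_div_sin]
  ring

end CotAux

open Real Topology Finset

set_option maxHeartbeats 800000 in
theorem euler_cot_partial_fraction (w : ℂ) (hw : ∀ n : ℤ, w ≠ (n : ℂ)) :
    (Real.pi : ℂ) * Complex.cot (Real.pi * w) =
      1 / w + ∑' n : ℕ, (1 / (w + ((n : ℂ) + 1)) + 1 / (w - ((n : ℂ) + 1))) := by
  have hw0 : w ≠ 0 := by simpa using hw 0
  have hcj : ∀ j : ℕ, ((j : ℂ) + 1) ≠ 0 := by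
    intro j
    rw [show ((j : ℂ) + 1) = ((j + 1 : ℕ) : ℂ) by push_cast; ring]
    exact Nat.cast_ne_zero.mpr (Nat.succ_ne_zero j)
  have hp : ∀ j : ℕ, w + ((j : ℂ) + 1) ≠ 0 := by
    intro j h
    apply hw (-(j + 1))
    push_cast
    linear_combination h
  have hm : ∀ j : ℕ, w - ((j : ℂ) + 1) ≠ 0 := by
    intro j h
    apply hw (j + 1)
    push_cast
    linear_combination h
  have hne2 : ∀ j : ℕ, w ^ 2 - ((j : ℂ) + 1) ^ 2 ≠ 0 := by
    intro j hh
    apply mul_ne_zero (hp j) (hm j)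
    rw [show (w + ((j:ℂ)+1)) * (w - ((j:ℂ)+1)) = w ^ 2 - ((j:ℂ)+1) ^ 2 by ring, hh]
  -- the term function and its summability
  set t : ℕ → ℂ := fun j => 1 / (w + ((j : ℂ) + 1)) + 1 / (w - ((j : ℂ) + 1)) with ht
  have hsum : Summable t := by
    obtain ⟨N, hNw⟩ := exists_nat_ge (2 * ‖w‖ ^ 2)
    refine Summable.of_norm_bounded_eventually (g := fun j : ℕ => 4 * ‖w‖ / ((j : ℝ) + 1) ^ 2)
      (aux_summable _) ?_
    rw [Nat.cofinite_eq_atTop]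
    filter_upwards [eventually_ge_atTop N] with n hn
    have heq : t n = 2 * w / (w ^ 2 - ((n : ℂ) + 1) ^ 2) := by
      rw [ht]
      show 1 / (w + ((n : ℂ) + 1)) + 1 / (w - ((n : ℂ) + 1)) = _
      rw [div_add_div _ _ (hp n) (hm n),
        div_eq_div_iff (mul_ne_zero (hp n) (hm n)) (hne2 n)]
      ring
    have hlow : ((n : ℝ) + 1) ^ 2 / 2 ≤ ‖w ^ 2 - ((n : ℂ) + 1) ^ 2‖ := by
      have h1 : ‖((n : ℂ) + 1) ^ 2‖ - ‖w ^ 2‖ ≤ ‖w ^ 2 - ((n : ℂ) + 1) ^ 2‖ := by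
        have := norm_sub_norm_le (((n : ℂ) + 1) ^ 2) (w ^ 2)
        rw [show ((n : ℂ) + 1) ^ 2 - w ^ 2 = -(w ^ 2 - ((n : ℂ) + 1) ^ 2) by ring,
          norm_neg] at this
        exact this
      rw [aux_norm_sq, norm_pow] at h1
      have h2 : 2 * ‖w‖ ^ 2 ≤ (n : ℝ) := le_trans hNw (by exact_mod_cast hn)
      nlinarith [sq_nonneg ((n : ℝ) + 1), norm_nonneg w]
    rw [heq, norm_div, norm_mul]
    have hpos : (0 : ℝ) < ((n : ℝ) + 1) ^ 2 / 2 := by positivity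
    rw [div_le_div_iff₀ (lt_of_lt_of_le hpos hlow) (by positivity)]
    have : ‖(2 : ℂ)‖ = 2 := by norm_num
    rw [this]
    nlinarith [norm_nonneg w, hlow, norm_nonneg (w ^ 2 - ((n : ℂ) + 1) ^ 2)]
  -- logDeriv of partial products
  have hlogP : ∀ n : ℕ, logDeriv (sinP n) w = 1 / w + ∑ j ∈ Finset.range n, t j := by
    intro n
    have hfac : ∀ j : ℕ, (1 - w ^ 2 / ((j : ℂ) + 1) ^ 2) ≠ 0 := by
      intro j h
      apply hne2 j
      have hc2 : ((j : ℂ) + 1) ^ 2 ≠ 0 := pow_ne_zero _ (hcj j)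
      field_simp at h
      linear_combination -h
    have hdfac : ∀ j : ℕ, DifferentiableAt ℂ (fun z : ℂ => 1 - z ^ 2 / ((j : ℂ) + 1) ^ 2) w :=
      fun j => ((differentiableAt_pow 2).div_const _).const_sub 1
    have hpi : (Real.pi : ℂ) ≠ 0 := Complex.ofReal_ne_zero.mpr Real.pi_ne_zero
    have hPeq : sinP n = fun z : ℂ =>
        (↑Real.pi * z) * ∏ j ∈ Finset.range n, (1 - z ^ 2 / ((j : ℂ) + 1) ^ 2) := rfl
    have hprodne : (fun z : ℂ => ∏ j ∈ Finset.range n, (1 - z ^ 2 / ((j : ℂ) + 1) ^ 2)) w ≠ 0 :=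
      Finset.prod_ne_zero_iff.mpr (fun j _ => hfac j)
    rw [hPeq, logDeriv_mul w (mul_ne_zero hpi hw0) hprodne
      (differentiableAt_fun_id.const_mul _) (DifferentiableAt.fun_finsetProd (fun j _ => hdfac j))]
    rw [logDeriv_const_mul _ _ hpi, logDeriv_id']
    congr 1
    have h2 := logDeriv_prod (s := Finset.range n)
      (f := fun j (z : ℂ) => 1 - z ^ 2 / ((j : ℂ) + 1) ^ 2) (x := w)
      (fun j _ => hfac j) (fun j _ => hdfac j)
    exact h2.trans (Finset.sum_congr rfl fun j _ =>
      aux_logDeriv_factor w ((j : ℂ) + 1) (hcj j) (hp j) (hm j))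
  -- locally uniform convergence & logDeriv limit
  set R : ℝ := ‖w‖ + 1 with hR
  have hws : w ∈ Metric.ball (0 : ℂ) R := by
    rw [Metric.mem_ball, dist_zero_right, hR]
    linarith
  have hF : TendstoLocallyUniformlyOn sinP (fun z => Complex.sin (↑Real.pi * z)) atTop
      (Metric.ball (0 : ℂ) R) :=
    ((aux_tuo R (by positivity)).tendstoLocallyUniformlyOn).mono Metric.ball_subset_closedBall
  have hg : Complex.sin (↑Real.pi * w) ≠ 0 := by
    rw [Complex.sin_ne_zero_iff]
    intro k h
    apply hw k
    have hpi : (Real.pi : ℂ) ≠ 0 := Complex.ofReal_ne_zero.mpr Real.pi_ne_zero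
    have h2 : (Real.pi : ℂ) * w = (Real.pi : ℂ) * (k : ℂ) := by rw [h]; ring
    exact mul_left_cancel₀ hpi h2
  have hdiff : ∀ n : ℕ, DifferentiableOn ℂ (sinP n) (Metric.ball (0 : ℂ) R) := by
    intro n z hz
    apply DifferentiableAt.differentiableWithinAt
    exact (differentiableAt_fun_id.const_mul _).mul
      (DifferentiableAt.fun_finsetProd (fun j _ =>
        ((differentiableAt_pow 2).div_const _).const_sub 1))
  have htends : Tendsto (fun n => logDeriv (sinP n) w) atTop
      (𝓝 (logDeriv (fun z => Complex.sin (↑Real.pi * z)) w)) := by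
    have h := logDeriv_tendsto (p := atTop) (s := Metric.ball (0 : ℂ) R) (f := sinP)
      (g := fun z => Complex.sin (↑Real.pi * z)) Metric.isOpen_ball hws
    exact h hF (Eventually.of_forall hdiff) hg
  rw [aux_logDeriv_sin] at htends
  have htends2 : Tendsto (fun n => 1 / w + ∑ j ∈ Finset.range n, t j) atTop
      (𝓝 (↑Real.pi * Complex.cot (↑Real.pi * w))) := by
    refine htends.congr fun n => ?_
    exact hlogP n
  have htends3 : Tendsto (fun n => 1 / w + ∑ j ∈ Finset.range n, t j) atTop
      (𝓝 (1 / w + ∑' j, t j)) :=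
    tendsto_const_nhds.add hsum.hasSum.tendsto_sum_nat
  exact tendsto_nhds_unique htends2 htends3
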